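/- Let c ∈ [0,1/2] and x ∈ ℚ ∩ [c,1]. Suppose there exists ω ∈ {0,1}^ℕ such that T_ω^n(x) ∉ S for all n ≥ 0. Then x has a unique c-Lüroth expansion, i.e. the sequence ((s_n(ω',x), d_n(ω',x)))_{n≥1} is the same for all ω' ∈ {0,1}^ℕ, and this sequence is ultimately periodic. -/

import Mathlib

open MeasureTheory Filter Set
open scoped Classical ENNReal

noncomputable section

/-- The Lüroth map `T_L`. -/
def TL (x : ℝ) : ℝ :=
  if x = 0 then 0
  else if x = 1 then 1
  else (⌈1/x⌉ : ℝ) * ((⌈1/x⌉ : ℝ) - 1) * x - ((⌈1/x⌉ : ℝ) - 1)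

/-- The alternating Lüroth map `T_A`. -/
def TA (x : ℝ) : ℝ := 1 - TL x

/-- `z_n⁺ = z_n + c·z_n·z_{n-1}`. -/
def zp (c : ℝ) (n : ℕ) : ℝ := 1/(n:ℝ) + c * (1/(n:ℝ)) * (1/((n:ℝ) - 1))

/-- `z_n⁻ = z_n − c·z_n·z_{n+1}`. -/
def zm (c : ℝ) (n : ℕ) : ℝ := 1/(n:ℝ) - c * (1/(n:ℝ)) * (1/((n:ℝ) + 1))

/-- The maps `T_{0,c}` (`j = false`) and `T_{1,c}` (`j = true`); for `c = 0` the points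
`0` and `z_n`, `n ≥ 2`, are additionally sent to `1`. -/
def Tc (j : Bool) (c : ℝ) (x : ℝ) : ℝ :=
  if c = 0 ∧ (x = 0 ∨ ∃ n : ℕ, 2 ≤ n ∧ x = 1/(n:ℝ)) then 1
  else if x = 1 then 1
  else if (j = false ∧ ∃ n : ℕ, 2 ≤ n ∧ 1/(n:ℝ) ≤ x ∧ x < zp c n) ∨
          (j = true ∧ ∃ n : ℕ, 2 ≤ n ∧ 1/(n:ℝ) ≤ x ∧ x ≤ zm c (n-1)) then TA x
  else TL x

/-- Random iteration: `Tom c ω n = T_{ω_n,c} ∘ ⋯ ∘ T_{ω_1,c}` (paths 0-indexed). -/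
def Tom (c : ℝ) (ω : ℕ → Bool) : ℕ → ℝ → ℝ
  | 0 => fun x => x
  | n+1 => fun x => Tc (ω n) c (Tom c ω n x)

/-- The digit `d_{n+1}(ω,x)` (0-indexed: `dig c ω x n` is the digit determined by `T_ω^n x`). -/
def dig (c : ℝ) (ω : ℕ → Bool) (x : ℝ) (n : ℕ) : ℕ :=
  if Tom c ω n x = 1 then 2 else (⌈1/(Tom c ω n x)⌉).toNat

/-- The switch region `S = [c,1] ∩ ⋃_{n≥2} [z_n⁺, z_{n-1}⁻]`. -/
def SwitchS (c : ℝ) : Set ℝ :=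
  {y | y ∈ Set.Icc c 1 ∧ ∃ n : ℕ, 2 ≤ n ∧ zp c n ≤ y ∧ y ≤ zm c (n-1)}

/-- The sign `s_{n+1}(ω,x)` (0-indexed: `sgn c ω x n` is the sign determined by `T_ω^n x`). -/
def sgn (c : ℝ) (ω : ℕ → Bool) (x : ℝ) (n : ℕ) : ℕ :=
  if c = 0 then (if ω n then 1 else 0)
  else if (ω n = false ∧ Tom c ω n x ∈ SwitchS c) ∨
          (∃ d : ℕ, 1 ≤ d ∧ zm c d < Tom c ω n x ∧ Tom c ω n x < 1/(d:ℝ)) ∨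
          Tom c ω n x = 1 then 0
  else 1

/-- The c-Lüroth expansion: `expansion c ω x n = (s_{n+1}(ω,x), d_{n+1}(ω,x))`. -/
def expansion (c : ℝ) (ω : ℕ → Bool) (x : ℝ) (n : ℕ) : ℕ × ℕ :=
  (sgn c ω x n, dig c ω x n)

/-- A sequence is ultimately periodic if some tail is periodic. -/
def UltimatelyPeriodic {α : Type*} (a : ℕ → α) : Prop :=
  ∃ N r : ℕ, 1 ≤ r ∧ ∀ n, N ≤ n → a (n + r) = a n

/-- The `n`-th convergent `p_n/q_n(ω,x)`. -/
def conv (c : ℝ) (ω : ℕ → Bool) (x : ℝ) (n : ℕ) : ℝ :=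
  ∑ k ∈ Finset.range n,
    (-1 : ℝ) ^ (∑ i ∈ Finset.range k, sgn c ω x i) *
      ((dig c ω x k : ℝ) - 1 + (sgn c ω x k : ℝ)) /
      (∏ i ∈ Finset.range (k+1), ((dig c ω x i : ℝ) * ((dig c ω x i : ℝ) - 1)))

/-- The value `Σ_{n≥1} (−1)^{s_1+⋯+s_{n−1}} (d_n − 1 + s_n)/∏_{i≤n} d_i(d_i−1)` of a
sign-digit sequence (0-indexed). -/
def lurothSum (a : ℕ → ℕ × ℕ) : ℝ :=
  ∑' n : ℕ,
    (-1 : ℝ) ^ (∑ i ∈ Finset.range n, (a i).1) *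
      (((a n).2 : ℝ) - 1 + ((a n).1 : ℝ)) /
      (∏ i ∈ Finset.range (n+1), (((a i).2 : ℝ) * (((a i).2 : ℝ) - 1)))

/-- The Bernoulli `(p, 1-p)` product measure on `{0,1}^ℕ` (coordinate `0 ↔ false` has
probability `p`). -/
def IsBernoulli (p : ℝ) (m : Measure (ℕ → Bool)) : Prop :=
  IsProbabilityMeasure m ∧
  ∀ (n : ℕ) (f : Fin n → Bool),
    m {ω : ℕ → Bool | ∀ i : Fin n, ω i = f i} =
      ∏ i : Fin n, ENNReal.ofReal (if f i then 1 - p else p)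

/-- The random 0-Lüroth transformation `L_0`. -/
def L0 (q : (ℕ → Bool) × ℝ) : (ℕ → Bool) × ℝ := (fun n => q.1 (n+1), Tc (q.1 0) 0 q.2)

/-- The `n`-th approximation coefficient `θ_n(ω,x)` (1-indexed `n`). -/
def theta (ω : ℕ → Bool) (x : ℝ) (n : ℕ) : ℝ :=
  ((dig 0 ω x (n-1) : ℝ) - (sgn 0 ω x (n-1) : ℝ)) *
    (∏ i ∈ Finset.range (n-1), ((dig 0 ω x i : ℝ) * ((dig 0 ω x i : ℝ) - 1))) *
    |x - conv 0 ω x n|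

/-- Distribution function `F_L` of the Lüroth approximation coefficients. -/
def FL (y : ℝ) : ℝ := (∑ k ∈ Finset.Icc 2 (⌊1/y⌋₊ + 1), y / (k:ℝ)) + 1/((⌊1/y⌋₊ : ℝ) + 1)

/-- Distribution function `F_A` of the alternating Lüroth approximation coefficients. -/
def FA (y : ℝ) : ℝ := (∑ k ∈ Finset.Icc 2 ⌊1/y⌋₊, y / ((k:ℝ) - 1)) + 1/(⌊1/y⌋₊ : ℝ)

/-- A sequence over the alphabet `A` is universal if every finite word over `A` occurs
in it as a consecutive block. -/
def IsUniversal (A : Set (ℕ × ℕ)) (e : ℕ → ℕ × ℕ) : Prop :=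
  ∀ (m : ℕ) (w : Fin m → ℕ × ℕ), (∀ i, w i ∈ A) →
    ∃ k : ℕ, ∀ i : Fin m, e (k + (i : ℕ)) = w i

/-- `c`-Lüroth admissible sequences. -/
def Admissible (c : ℝ) (a : ℕ → ℕ × ℕ) : Prop :=
  (∀ n, (a n).1 ≤ 1 ∧ 2 ≤ (a n).2 ∧ (a n).2 ≤ ⌈1/c⌉₊) ∧
  (∀ k : ℕ, lurothSum (fun n => a (k + n)) ∈ Set.Icc c 1) ∧
  ¬ ∃ (N d : ℕ), 2 ≤ d ∧ d < ⌈1/c⌉₊ ∧ a N = (0, d+1) ∧ ∀ n, N < n → a n = (0, 2)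


lemma cast_pred {n : ℕ} (hn : 2 ≤ n) : ((n - 1 : ℕ) : ℝ) = (n:ℝ) - 1 := by
  have h1 : 1 ≤ n := by omega
  push_cast [Nat.cast_sub h1]
  ring

lemma zm_pred {c : ℝ} {n : ℕ} (hn : 2 ≤ n) :
    zm c (n-1) = 1/((n:ℝ)-1) - c * (1/((n:ℝ)-1)) * (1/(n:ℝ)) := by
  rw [zm, cast_pred hn]
  ring_nf

lemma ceil_inv_eq {n : ℕ} (hn : 2 ≤ n) {y : ℝ} (h1 : 1/(n:ℝ) ≤ y)
    (h2 : y < 1/((n:ℝ)-1)) : ⌈1/y⌉ = (n:ℤ) := by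
  have hN : (2:ℝ) ≤ (n:ℝ) := by exact_mod_cast hn
  have hN0 : (0:ℝ) < (n:ℝ) := by linarith
  have hN1 : (0:ℝ) < (n:ℝ) - 1 := by linarith
  have hy0 : 0 < y := lt_of_lt_of_le (by positivity) h1
  rw [Int.ceil_eq_iff]
  constructor
  · push_cast
    rw [lt_div_iff₀ hy0]
    rw [lt_div_iff₀ hN1] at h2
    nlinarith
  · push_cast
    rw [div_le_iff₀ hy0]
    rw [div_le_iff₀ hN0] at h1
    nlinarith

lemma TL_formula {n : ℕ} (hn : 2 ≤ n) {y : ℝ} (h1 : 1/(n:ℝ) ≤ y)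
    (h2 : y < 1/((n:ℝ)-1)) :
    TL y = (n:ℝ) * ((n:ℝ)-1) * y - ((n:ℝ)-1) := by
  have hN : (2:ℝ) ≤ (n:ℝ) := by exact_mod_cast hn
  have hN1 : (0:ℝ) < (n:ℝ) - 1 := by linarith
  have hy0 : 0 < y := lt_of_lt_of_le (by positivity) h1
  have hy1 : y < 1 := lt_of_lt_of_le h2 (by rw [div_le_one hN1]; linarith)
  rw [TL, if_neg hy0.ne', if_neg hy1.ne, ceil_inv_eq hn h1 h2]
  push_cast
  ring

lemma exists_n {y : ℝ} (hy0 : 0 < y) (hy1 : y < 1) :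
    ∃ n : ℕ, 2 ≤ n ∧ 1/(n:ℝ) ≤ y ∧ y < 1/((n:ℝ)-1) := by
  refine ⟨⌈1/y⌉₊, ?_, ?_, ?_⟩
  · have h : (1:ℝ) < 1/y := by rw [lt_div_iff₀ hy0]; linarith
    have h2 : 1 < ⌈1/y⌉₊ := Nat.lt_ceil.mpr (by exact_mod_cast h)
    omega
  · have h : (1:ℝ) < 1/y := by rw [lt_div_iff₀ hy0]; linarith
    have h2 : 1 < ⌈1/y⌉₊ := Nat.lt_ceil.mpr (by exact_mod_cast h)
    have hn0 : (0:ℝ) < (⌈1/y⌉₊:ℝ) := by positivity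
    have hle : 1/y ≤ (⌈1/y⌉₊:ℝ) := Nat.le_ceil _
    have hid : y * (1/y) = 1 := by field_simp
    rw [div_le_iff₀ hn0]
    nlinarith
  · have h : (1:ℝ) < 1/y := by rw [lt_div_iff₀ hy0]; linarith
    have h2 : 1 < ⌈1/y⌉₊ := Nat.lt_ceil.mpr (by exact_mod_cast h)
    have hN1 : (0:ℝ) < (⌈1/y⌉₊:ℝ) - 1 := by
      have : (1:ℝ) < (⌈1/y⌉₊:ℝ) := by exact_mod_cast h2
      linarith
    have hlt : (⌈1/y⌉₊:ℝ) < 1/y + 1 := Nat.ceil_lt_add_one (by positivity)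
    have hid : y * (1/y) = 1 := by field_simp
    rw [lt_div_iff₀ hN1]
    nlinarith

lemma E_zp {c : ℝ} {n : ℕ} (hn : 2 ≤ n) :
    (n:ℝ) * ((n:ℝ)-1) * zp c n - ((n:ℝ)-1) = c := by
  have hN : (2:ℝ) ≤ (n:ℝ) := by exact_mod_cast hn
  have hN0 : (n:ℝ) ≠ 0 := by linarith
  have hN1 : (n:ℝ) - 1 ≠ 0 := by intro h; nlinarith [h]
  rw [zp]; field_simp; ring

lemma E_zm {c : ℝ} {n : ℕ} (hn : 2 ≤ n) :
    (n:ℝ) * ((n:ℝ)-1) * zm c (n-1) - ((n:ℝ)-1) = 1 - c := by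
  have hN : (2:ℝ) ≤ (n:ℝ) := by exact_mod_cast hn
  have hN0 : (n:ℝ) ≠ 0 := by linarith
  have hN1 : (n:ℝ) - 1 ≠ 0 := by intro h; nlinarith [h]
  rw [zm_pred hn]; field_simp; ring_nf

lemma E_one {n : ℕ} (hn : 2 ≤ n) :
    (n:ℝ) * ((n:ℝ)-1) * (1/((n:ℝ)-1)) - ((n:ℝ)-1) = 1 := by
  have hN : (2:ℝ) ≤ (n:ℝ) := by exact_mod_cast hn
  have hN1 : (n:ℝ) - 1 ≠ 0 := by intro h; nlinarith [h]
  field_simp; ring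

lemma E_zero {n : ℕ} (hn : 2 ≤ n) :
    (n:ℝ) * ((n:ℝ)-1) * (1/(n:ℝ)) - ((n:ℝ)-1) = 0 := by
  have hN : (2:ℝ) ≤ (n:ℝ) := by exact_mod_cast hn
  have hN0 : (n:ℝ) ≠ 0 := by linarith
  field_simp; ring

lemma NN_pos {n : ℕ} (hn : 2 ≤ n) : (0:ℝ) < (n:ℝ) * ((n:ℝ)-1) := by
  have hN : (2:ℝ) ≤ (n:ℝ) := by exact_mod_cast hn
  nlinarith

lemma zp_le_zm {c : ℝ} {n : ℕ} (hn : 2 ≤ n) (hc2 : c ≤ 1/2) :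
    zp c n ≤ zm c (n-1) := by
  have h1 := E_zp (c := c) hn
  have h2 := E_zm (c := c) hn
  have hpos := NN_pos hn
  have : (n:ℝ) * ((n:ℝ)-1) * zp c n ≤ (n:ℝ) * ((n:ℝ)-1) * zm c (n-1) := by linarith
  exact le_of_mul_le_mul_left this hpos

lemma zp_lt_pred {c : ℝ} {n : ℕ} (hn : 2 ≤ n) (hc2 : c ≤ 1/2) :
    zp c n < 1/((n:ℝ)-1) := by
  have h1 := E_zp (c := c) hn
  have h2 := E_one hn
  have hpos := NN_pos hn
  have : (n:ℝ) * ((n:ℝ)-1) * zp c n < (n:ℝ) * ((n:ℝ)-1) * (1/((n:ℝ)-1)) := by linarith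
  exact lt_of_mul_lt_mul_left this hpos.le

lemma zm_lt_pred {c : ℝ} {n : ℕ} (hn : 2 ≤ n) (hc0 : 0 < c) :
    zm c (n-1) < 1/((n:ℝ)-1) := by
  have h1 := E_zm (c := c) hn
  have h2 := E_one hn
  have hpos := NN_pos hn
  have : (n:ℝ) * ((n:ℝ)-1) * zm c (n-1) < (n:ℝ) * ((n:ℝ)-1) * (1/((n:ℝ)-1)) := by linarith
  exact lt_of_mul_lt_mul_left this hpos.le

lemma Tc_mem {c : ℝ} (hc0 : 0 < c) (hc2 : c ≤ 1/2) (j : Bool) {y : ℝ}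
    (hy : y ∈ Set.Icc c 1) : Tc j c y ∈ Set.Icc c 1 := by
  obtain ⟨hyc, hy1⟩ := hy
  have hy0 : 0 < y := lt_of_lt_of_le hc0 hyc
  rw [Tc, if_neg (by rintro ⟨h, -⟩; exact hc0.ne' h)]
  by_cases h1 : y = 1
  · rw [if_pos h1]; exact ⟨by linarith, le_refl 1⟩
  rw [if_neg h1]
  have hylt1 : y < 1 := lt_of_le_of_ne hy1 h1
  obtain ⟨n, hn, hn1, hn2⟩ := exists_n hy0 hylt1
  have hpos := NN_pos hn
  by_cases hb : (j = false ∧ ∃ n : ℕ, 2 ≤ n ∧ 1/(n:ℝ) ≤ y ∧ y < zp c n) ∨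
          (j = true ∧ ∃ n : ℕ, 2 ≤ n ∧ 1/(n:ℝ) ≤ y ∧ y ≤ zm c (n-1))
  · rw [if_pos hb]
    rcases hb with ⟨-, m, hm, hm1, hm2⟩ | ⟨-, m, hm, hm1, hm2⟩
    · -- y ∈ [1/m, zp c m), TL y ∈ [0, c)
      have hm2' : y < 1/((m:ℝ)-1) := lt_trans hm2 (zp_lt_pred hm hc2)
      rw [TA, TL_formula hm hm1 hm2']
      have hE0 := E_zero (n := m) hm
      have hEzp := E_zp (c := c) (n := m) hm
      have hposm := NN_pos hm
      have l1 : (m:ℝ) * ((m:ℝ)-1) * (1/(m:ℝ)) ≤ (m:ℝ) * ((m:ℝ)-1) * y :=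
        mul_le_mul_of_nonneg_left hm1 hposm.le
      have l2 : (m:ℝ) * ((m:ℝ)-1) * y < (m:ℝ) * ((m:ℝ)-1) * zp c m :=
        (mul_lt_mul_iff_right₀ hposm).mpr hm2
      constructor <;> [skip; skip] <;> nlinarith
    · -- y ∈ [1/m, zm c (m-1)], TL y ∈ [0, 1-c]
      have hm2' : y < 1/((m:ℝ)-1) := lt_of_le_of_lt hm2 (zm_lt_pred hm hc0)
      rw [TA, TL_formula hm hm1 hm2']
      have hE0 := E_zero (n := m) hm
      have hEzm := E_zm (c := c) (n := m) hm
      have hposm := NN_pos hm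
      have l1 : (m:ℝ) * ((m:ℝ)-1) * (1/(m:ℝ)) ≤ (m:ℝ) * ((m:ℝ)-1) * y :=
        mul_le_mul_of_nonneg_left hm1 hposm.le
      have l2 : (m:ℝ) * ((m:ℝ)-1) * y ≤ (m:ℝ) * ((m:ℝ)-1) * zm c (m-1) :=
        mul_le_mul_of_nonneg_left hm2 hposm.le
      constructor <;> nlinarith
  · rw [if_neg hb]
    rw [TL_formula hn hn1 hn2]
    have hE1 := E_one (n := n) hn
    have l2 : (n:ℝ) * ((n:ℝ)-1) * y < (n:ℝ) * ((n:ℝ)-1) * (1/((n:ℝ)-1)) :=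
      (mul_lt_mul_iff_right₀ hpos).mpr hn2
    cases j with
    | false =>
      have hge : zp c n ≤ y := by
        by_contra hlt
        exact hb (Or.inl ⟨rfl, n, hn, hn1, not_le.mp hlt⟩)
      have hEzp := E_zp (c := c) (n := n) hn
      have l1 : (n:ℝ) * ((n:ℝ)-1) * zp c n ≤ (n:ℝ) * ((n:ℝ)-1) * y :=
        mul_le_mul_of_nonneg_left hge hpos.le
      constructor <;> nlinarith
    | true =>
      have hge : zm c (n-1) < y := by
        by_contra hlt
        exact hb (Or.inr ⟨rfl, n, hn, hn1, not_lt.mp hlt⟩)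
      have hEzm := E_zm (c := c) (n := n) hn
      have l1 : (n:ℝ) * ((n:ℝ)-1) * zm c (n-1) ≤ (n:ℝ) * ((n:ℝ)-1) * y :=
        mul_le_mul_of_nonneg_left hge.le hpos.le
      constructor <;> nlinarith

lemma Tc_agree {c : ℝ} (hc0 : 0 < c) (hc2 : c ≤ 1/2) {y : ℝ}
    (hy : y ∈ Set.Icc c 1) (hyS : y ∉ SwitchS c) (j j' : Bool) :
    Tc j c y = Tc j' c y := by
  have key : Tc false c y = Tc true c y := by
    have hcond : ¬(c = 0 ∧ (y = 0 ∨ ∃ n : ℕ, 2 ≤ n ∧ y = 1/(n:ℝ))) := by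
      rintro ⟨h, -⟩; exact hc0.ne' h
    rw [Tc, Tc, if_neg hcond, if_neg hcond]
    by_cases h1 : y = 1
    · rw [if_pos h1, if_pos h1]
    rw [if_neg h1, if_neg h1]
    have hiff : (∃ n : ℕ, 2 ≤ n ∧ 1/(n:ℝ) ≤ y ∧ y < zp c n) ↔
        (∃ n : ℕ, 2 ≤ n ∧ 1/(n:ℝ) ≤ y ∧ y ≤ zm c (n-1)) := by
      constructor
      · rintro ⟨n, hn, ha, hb⟩
        exact ⟨n, hn, ha, le_trans hb.le (zp_le_zm hn hc2)⟩
      · rintro ⟨n, hn, ha, hb⟩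
        by_cases hlt : y < zp c n
        · exact ⟨n, hn, ha, hlt⟩
        · exact absurd ⟨hy, n, hn, not_lt.mp hlt, hb⟩ hyS
    apply if_congr _ rfl rfl
    constructor
    · rintro (⟨-, h⟩ | ⟨h, -⟩)
      · exact Or.inr ⟨rfl, hiff.mp h⟩
      · simp at h
    · rintro (⟨h, -⟩ | ⟨-, h⟩)
      · simp at h
      · exact Or.inl ⟨rfl, hiff.mpr h⟩
  cases j <;> cases j' <;> first | rfl | exact key | exact key.symm

lemma TL_rat {q : ℕ} (hq : 0 < q) {y : ℝ} (hy : ∃ k : ℤ, y = (k:ℝ)/(q:ℝ)) :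
    ∃ k : ℤ, TL y = (k:ℝ)/(q:ℝ) := by
  have hq0 : (q:ℝ) ≠ 0 := by positivity
  rw [TL]
  split_ifs with h1 h2
  · exact ⟨0, by simp⟩
  · exact ⟨q, by push_cast; rw [div_self hq0]⟩
  · obtain ⟨k, rfl⟩ := hy
    refine ⟨⌈1/((k:ℝ)/(q:ℝ))⌉ * (⌈1/((k:ℝ)/(q:ℝ))⌉ - 1) * k - (⌈1/((k:ℝ)/(q:ℝ))⌉ - 1) * q, ?_⟩
    push_cast
    field_simp

lemma Tc_rat {c : ℝ} (hc0 : c ≠ 0) {q : ℕ} (hq : 0 < q) (j : Bool) {y : ℝ}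
    (hy : ∃ k : ℤ, y = (k:ℝ)/(q:ℝ)) : ∃ k : ℤ, Tc j c y = (k:ℝ)/(q:ℝ) := by
  have hq0 : (q:ℝ) ≠ 0 := by positivity
  rw [Tc, if_neg (by rintro ⟨h, -⟩; exact hc0 h)]
  split_ifs with h1 h2
  · exact ⟨q, by push_cast; rw [div_self hq0]⟩
  · obtain ⟨k, hk⟩ := TL_rat hq hy
    exact ⟨q - k, by rw [TA, hk]; push_cast; field_simp⟩
  · exact TL_rat hq hy

-- the c = 0 case is vacuous
lemma c_zero_absurd {x : ℝ} (hx : x ∈ Set.Icc (0:ℝ) 1) {ω : ℕ → Bool}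
    (hω : ∀ n : ℕ, Tom 0 ω n x ∉ SwitchS 0) : False := by
  have hone : (1:ℝ) ∈ SwitchS 0 := by
    refine ⟨⟨by norm_num, le_refl 1⟩, 2, le_refl 2, ?_, ?_⟩
    · rw [zp]; norm_num
    · rw [zm_pred (le_refl 2)]; norm_num
  rcases eq_or_lt_of_le hx.1 with hx0 | hxpos
  · apply hω 1
    show Tc (ω 0) 0 (Tom 0 ω 0 x) ∈ SwitchS 0
    have : Tom 0 ω 0 x = x := rfl
    rw [this, Tc, if_pos ⟨rfl, Or.inl hx0.symm⟩]
    exact hone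
  · apply hω 0
    show x ∈ SwitchS 0
    set n : ℕ := max ⌈1/x⌉₊ 2 with hn
    have hn2 : 2 ≤ n := le_max_right _ _
    have hN2 : (2:ℝ) ≤ (n:ℝ) := by exact_mod_cast hn2
    have hN1 : (0:ℝ) < (n:ℝ) - 1 := by linarith
    have hup : 1/x ≤ (n:ℝ) := by
      calc 1/x ≤ (⌈1/x⌉₊:ℝ) := Nat.le_ceil _
      _ ≤ (n:ℝ) := by exact_mod_cast le_max_left _ _
    have hdown : (n:ℝ) - 1 ≤ 1/x := by
      rcases max_cases ⌈1/x⌉₊ 2 with ⟨h1, h2⟩ | ⟨h1, h2⟩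
      · have := Nat.ceil_lt_add_one (a := 1/x) (by positivity)
        rw [hn, h1]
        push_cast
        linarith
      · rw [hn, h1]
        have : 1 ≤ 1/x := by
          rw [le_div_iff₀ hxpos]; linarith [hx.2]
        push_cast
        linarith
    have hid : x * (1/x) = 1 := by field_simp
    refine ⟨hx, n, hn2, ?_, ?_⟩
    · rw [zp]
      have : 1/(n:ℝ) ≤ x := by
        rw [div_le_iff₀ (by linarith : (0:ℝ) < (n:ℝ))]
        nlinarith
      nlinarith
    · rw [zm_pred hn2]
      have : x ≤ 1/((n:ℝ)-1) := by
        rw [le_div_iff₀ hN1]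
        nlinarith
      nlinarith

lemma dig_congr {c : ℝ} {ω₁ ω₂ : ℕ → Bool} {x₁ x₂ : ℝ} {n₁ n₂ : ℕ}
    (h : Tom c ω₁ n₁ x₁ = Tom c ω₂ n₂ x₂) : dig c ω₁ x₁ n₁ = dig c ω₂ x₂ n₂ := by
  rw [dig, dig, h]

lemma sgn_congr {c : ℝ} (hc : c ≠ 0) {ω₁ ω₂ : ℕ → Bool} {x₁ x₂ : ℝ} {n₁ n₂ : ℕ}
    (h : Tom c ω₁ n₁ x₁ = Tom c ω₂ n₂ x₂) (hS : Tom c ω₂ n₂ x₂ ∉ SwitchS c) :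
    sgn c ω₁ x₁ n₁ = sgn c ω₂ x₂ n₂ := by
  rw [sgn, sgn, if_neg hc, if_neg hc, h]
  apply if_congr _ rfl rfl
  constructor
  · rintro (⟨-, hm⟩ | h')
    · exact absurd hm hS
    · exact Or.inr h'
  · rintro (⟨-, hm⟩ | h')
    · exact absurd hm hS
    · exact Or.inr h'


/-- if the random orbit of a rational `x ∈ [c,1]` can avoid the switch
region, then `x` has a unique `c`-Lüroth expansion, which is ultimately periodic. -/
theorem unique_ultimately_periodic_expansion (c : ℝ) (hc : c ∈ Set.Icc (0:ℝ) (1/2))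
    (x : ℝ) (hx : x ∈ Set.Icc c 1) (hxq : ∃ q : ℚ, (q : ℝ) = x)
    (hS : ∃ ω : ℕ → Bool, ∀ n : ℕ, Tom c ω n x ∉ SwitchS c) :
    (∀ ω₁ ω₂ : ℕ → Bool, expansion c ω₁ x = expansion c ω₂ x) ∧
    (∀ ω : ℕ → Bool, UltimatelyPeriodic (expansion c ω x)) := by
  obtain ⟨hcl, hc2⟩ := hc
  obtain ⟨ω, hω⟩ := hS
  rcases eq_or_lt_of_le hcl with hceq | hc0
  · exact absurd (hω) (by rw [← hceq] at hx ⊢; exact fun h => c_zero_absurd hx h)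
  -- c > 0 from here on
  have hcne : c ≠ 0 := hc0.ne'
  set f : ℝ → ℝ := Tc false c with hf
  have orbit : ∀ n : ℕ, f^[n] x ∈ Set.Icc c 1 ∧ f^[n] x ∉ SwitchS c ∧
      ∀ ω' : ℕ → Bool, Tom c ω' n x = f^[n] x := by
    intro n
    induction n with
    | zero => exact ⟨hx, hω 0, fun ω' => rfl⟩
    | succ n ih =>
      obtain ⟨hmem, hnS, heq⟩ := ih
      have heq' : ∀ ω' : ℕ → Bool, Tom c ω' (n+1) x = f^[n+1] x := by
        intro ω'
        show Tc (ω' n) c (Tom c ω' n x) = f^[n+1] x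
        rw [heq ω', Function.iterate_succ_apply']
        exact Tc_agree hc0 hc2 hmem hnS (ω' n) false
      refine ⟨?_, ?_, heq'⟩
      · rw [Function.iterate_succ_apply']
        exact Tc_mem hc0 hc2 false hmem
      · rw [← heq' ω]
        exact hω (n+1)
  constructor
  · intro ω₁ ω₂
    funext n
    have h1 := (orbit n).2.2 ω₁
    have h2 := (orbit n).2.2 ω₂
    have hTT : Tom c ω₁ n x = Tom c ω₂ n x := h1.trans h2.symm
    have hnS : Tom c ω₂ n x ∉ SwitchS c := by rw [h2]; exact (orbit n).2.1
    exact Prod.ext (sgn_congr hcne hTT hnS) (dig_congr hTT)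
  · intro ω'
    obtain ⟨qr, hqr⟩ := hxq
    set Q : ℕ := qr.den with hQdef
    have hQ : 0 < Q := qr.pos
    have hxrat : ∃ k : ℤ, x = (k:ℝ)/(Q:ℝ) := ⟨qr.num, by rw [← hqr, Rat.cast_def]⟩
    have hrat : ∀ n : ℕ, ∃ k : ℤ, f^[n] x = (k:ℝ)/(Q:ℝ) := by
      intro n
      induction n with
      | zero => exact hxrat
      | succ n ih =>
        rw [Function.iterate_succ_apply']
        exact Tc_rat hcne hQ false ih
    -- finiteness
    have hfin : (Set.Icc (0:ℝ) 1 ∩ {y : ℝ | ∃ k : ℤ, y = (k:ℝ)/(Q:ℝ)}).Finite := by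
      apply Set.Finite.subset ((Set.finite_Icc (0:ℤ) (Q:ℤ)).image (fun k : ℤ => (k:ℝ)/(Q:ℝ)))
      rintro y ⟨⟨hy0, hy1⟩, k, rfl⟩
      refine ⟨k, ⟨?_, ?_⟩, rfl⟩
      · by_contra hk
        push_neg at hk
        have : (k:ℝ) < 0 := by exact_mod_cast hk
        have hQ0 : (0:ℝ) < (Q:ℝ) := by exact_mod_cast hQ
        have hneg : (k:ℝ)/(Q:ℝ) < 0 := div_neg_of_neg_of_pos this hQ0
        linarith
      · by_contra hk
        push_neg at hk
        have hgt : (Q:ℝ) < (k:ℝ) := by exact_mod_cast hk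
        have hQ0 : (0:ℝ) < (Q:ℝ) := by exact_mod_cast hQ
        rw [div_le_one hQ0] at hy1
        linarith
    have hmemF : ∀ n : ℕ, f^[n] x ∈ Set.Icc (0:ℝ) 1 ∩ {y : ℝ | ∃ k : ℤ, y = (k:ℝ)/(Q:ℝ)} := by
      intro n
      refine ⟨⟨?_, (orbit n).1.2⟩, hrat n⟩
      exact le_trans hcl (orbit n).1.1
    obtain ⟨a, b, hab, habe⟩ := Set.Finite.exists_lt_map_eq_of_forall_mem hmemF hfin
    refine ⟨a, b - a, by omega, ?_⟩
    have hper : ∀ n : ℕ, a ≤ n → f^[n + (b-a)] x = f^[n] x := by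
      intro n hn
      obtain ⟨t, rfl⟩ := Nat.exists_eq_add_of_le hn
      have h1 : a + t + (b - a) = t + b := by omega
      have h2 : a + t = t + a := by omega
      rw [h1, h2, Function.iterate_add_apply, Function.iterate_add_apply, habe]
    intro n hn
    have hTT : Tom c ω' (n + (b-a)) x = Tom c ω' n x := by
      rw [(orbit (n + (b-a))).2.2 ω', (orbit n).2.2 ω', hper n hn]
    have hnS : Tom c ω' n x ∉ SwitchS c := by
      rw [(orbit n).2.2 ω']; exact (orbit n).2.1
    exact Prod.ext (sgn_congr hcne hTT hnS) (dig_congr hTT)
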